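/- Let ℓ : ℝ^m × ℝ^m → ℝ be differentiable and convex in its first argument for each value of its second argument. Define F(W,V) = (1/n)·Σ_{i=1}^n ℓ(W(x_i + V f(x_i)); y_i) for W ∈ ℝ^{m×d}, V ∈ ℝ^{d×k}, and F_lin(U) = (1/n)·Σ_{i=1}^n ℓ(U x_i; y_i) for U ∈ ℝ^{m×d}. Then at any point (W,V) for which W has full row rank with minimal singular value s_min(W) > 0, and for any U ∈ ℝ^{m×d}: ‖∇F(W,V)‖ ≥ (F(W,V) − F_lin(U)) / √(2‖W‖_F² + ‖U‖_F²·(2 + ‖V‖²/s_min(W)²)), where ∇F(W,V) is the gradient of F with respect to the concatenated vector (vec(W), vec(V)), ‖·‖_F is the Frobenius norm, and ‖V‖ is the spectral norm. -/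

import Mathlib

open scoped RealInnerProductSpace
open Finset Matrix

noncomputable section

/-- Euclidean column vectors in `ℝ^d`. -/
abbrev Vec (d : ℕ) : Type := EuclideanSpace ℝ (Fin d)

/-- The concatenated parameter vector `(vec(W), vec(V))`. -/
abbrev ParamM (m d k : ℕ) : Type := EuclideanSpace ℝ ((Fin m × Fin d) ⊕ (Fin d × Fin k))

/-- Pack `(W, V)` into a single Euclidean vector. -/
def pairWVm {m d k : ℕ} (W : Matrix (Fin m) (Fin d) ℝ) (V : Matrix (Fin d) (Fin k) ℝ) :
    ParamM m d k :=
  (EuclideanSpace.equiv ((Fin m × Fin d) ⊕ (Fin d × Fin k)) ℝ).symm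
    (Sum.elim (fun p => W p.1 p.2) (fun p => V p.1 p.2))

/-- The vector-output residual-network objective
`F(W,V) = (1/n)·Σᵢ ℓ(W(xᵢ + V f(xᵢ)); yᵢ)`. -/
def netObjVec {m d k n : ℕ} (ℓ : Vec m → Vec m → ℝ) (f : Vec d → Vec k)
    (x : Fin n → Vec d) (y : Fin n → Vec m) (z : ParamM m d k) : ℝ :=
  (1 / (n : ℝ)) *
    ∑ i, ℓ ((EuclideanSpace.equiv (Fin m) ℝ).symm fun a =>
        ∑ j, z (Sum.inl (a, j)) * ((x i) j + ∑ l, z (Sum.inr (j, l)) * (f (x i)) l)) (y i)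

/-- The linear-predictor objective `F_lin(U) = (1/n)·Σᵢ ℓ(U xᵢ; yᵢ)`. -/
def linObjVec {m d n : ℕ} (ℓ : Vec m → Vec m → ℝ) (x : Fin n → Vec d) (y : Fin n → Vec m)
    (U : Matrix (Fin m) (Fin d) ℝ) : ℝ :=
  (1 / (n : ℝ)) *
    ∑ i, ℓ ((EuclideanSpace.equiv (Fin m) ℝ).symm (U.mulVec fun j => (x i) j)) (y i)

/-- Spectral norm of a matrix. -/
def matSpectralNorm {ι κ : Type} [Fintype ι] [Fintype κ] [DecidableEq κ] (V : Matrix ι κ ℝ) : ℝ :=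
  ‖LinearMap.toContinuousLinearMap (Matrix.toEuclideanLin V)‖

/-- Frobenius norm of a matrix. -/
def frobNorm {ι κ : Type} [Fintype ι] [Fintype κ] (A : Matrix ι κ ℝ) : ℝ :=
  Real.sqrt (∑ i, ∑ j, A i j ^ 2)

/-- Minimal eigenvalue via the Rayleigh quotient `λ_min(M) = min_{‖z‖=1} zᵀ M z`. -/
def lambdaMin {ι : Type} [Fintype ι] [DecidableEq ι] (M : Matrix ι ι ℝ) : ℝ :=
  ⨅ z : {z : EuclideanSpace ℝ ι // ‖z‖ = 1}, ⟪z.1, Matrix.toEuclideanLin M z.1⟫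

/-- The minimal singular value of `W`: `s_min(W) = √(λ_min(W Wᵀ))`. -/
def sMin {m d : ℕ} (W : Matrix (Fin m) (Fin d) ℝ) : ℝ :=
  Real.sqrt (lambdaMin (W * Wᵀ))

set_option synthInstance.maxHeartbeats 1000000
set_option maxHeartbeats 4000000

lemma aux_normsq {ι : Type} [Fintype ι] (v : EuclideanSpace ℝ ι) : ‖v‖^2 = ∑ i, v i^2 := by
  rw [EuclideanSpace.norm_eq, Real.sq_sqrt (by positivity)]
  simp [sq_abs]

lemma aux_sum_sq_mulVec_le {ι κ : Type} [Fintype ι] [Fintype κ] [DecidableEq κ]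
    (V : Matrix ι κ ℝ) (w : κ → ℝ) :
    ∑ i, (V.mulVec w i)^2 ≤ matSpectralNorm V ^2 * ∑ j, w j ^2 := by
  have h2 : ‖(WithLp.equiv 2 (ι → ℝ)).symm (V.mulVec w)‖ ≤
      matSpectralNorm V * ‖(WithLp.equiv 2 (κ → ℝ)).symm w‖ :=
    (LinearMap.toContinuousLinearMap (Matrix.toEuclideanLin V)).le_opNorm
      ((WithLp.equiv 2 (κ → ℝ)).symm w)
  have h3 := pow_le_pow_left₀ (norm_nonneg _) h2 2
  rw [mul_pow, aux_normsq, aux_normsq] at h3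
  simpa using h3

lemma aux_sum_sq_mulVec_transpose_le {ι κ : Type} [Fintype ι] [Fintype κ] [DecidableEq κ]
    (V : Matrix ι κ ℝ) (u : ι → ℝ) :
    ∑ l, (Vᵀ.mulVec u l)^2 ≤ matSpectralNorm V ^2 * ∑ i, u i ^2 := by
  set T : κ → ℝ := Vᵀ.mulVec u with hT
  set S := ∑ l, T l ^2 with hS
  have hS0 : 0 ≤ S := Finset.sum_nonneg fun _ _ => sq_nonneg _
  have hkey : S = ∑ i, u i * (V.mulVec T) i := by
    simp only [hS, Matrix.mulVec, dotProduct, Finset.mul_sum]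
    rw [Finset.sum_comm]
    refine Finset.sum_congr rfl fun l _ => ?_
    rw [sq, hT]
    simp only [Matrix.mulVec, dotProduct, Matrix.transpose_apply, Finset.sum_mul]
    refine Finset.sum_congr rfl fun i _ => by ring
  have hcs : (∑ i, u i * (V.mulVec T) i)^2 ≤ (∑ i, u i ^2) * (∑ i, ((V.mulVec T) i)^2) :=
    Finset.sum_mul_sq_le_sq_mul_sq _ _ _
  have hsp : ∑ i, ((V.mulVec T) i)^2 ≤ matSpectralNorm V ^2 * S :=
    aux_sum_sq_mulVec_le V T
  have hsp0 : (0:ℝ) ≤ matSpectralNorm V ^2 := sq_nonneg _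
  have hu0 : (0:ℝ) ≤ ∑ i, u i ^2 := Finset.sum_nonneg fun _ _ => sq_nonneg _
  rcases hS0.eq_or_lt' with h | h
  · rw [h]; positivity
  · have h4 : S^2 ≤ (∑ i, u i ^2) * (matSpectralNorm V ^2 * S) := by
      calc S^2 = (∑ i, u i * (V.mulVec T) i)^2 := by rw [hkey]
        _ ≤ (∑ i, u i ^2) * (∑ i, ((V.mulVec T) i)^2) := hcs
        _ ≤ (∑ i, u i ^2) * (matSpectralNorm V ^2 * S) := by
            exact mul_le_mul_of_nonneg_left hsp hu0
    nlinarith [h4, h]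

lemma aux_rayleigh {ι : Type} [Fintype ι] [DecidableEq ι] (M : Matrix ι ι ℝ) (u : ι → ℝ) :
    lambdaMin M * ∑ i, u i ^2 ≤ ∑ i, u i * (M.mulVec u) i := by
  by_cases hu : u = 0
  · subst hu; simp [lambdaMin]
  · set uE : EuclideanSpace ℝ ι := (WithLp.equiv 2 (ι → ℝ)).symm u with huE
    have huE0 : uE ≠ 0 := by
      intro h
      apply hu
      funext i
      have := congrFun (congrArg (WithLp.equiv 2 (ι → ℝ)) h) i
      simpa [huE] using this
    have hn : 0 < ‖uE‖ := norm_pos_iff.mpr huE0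
    set z : EuclideanSpace ℝ ι := ‖uE‖⁻¹ • uE with hz
    have hz1 : ‖z‖ = 1 := by
      rw [hz, norm_smul, norm_inv, norm_norm, inv_mul_cancel₀ hn.ne']
    have hbdd : BddBelow (Set.range fun z : {z : EuclideanSpace ℝ ι // ‖z‖ = 1} =>
        ⟪z.1, Matrix.toEuclideanLin M z.1⟫) := by
      refine ⟨-‖LinearMap.toContinuousLinearMap (Matrix.toEuclideanLin M)‖, ?_⟩
      rintro r ⟨w, rfl⟩
      have h1 : |⟪w.1, Matrix.toEuclideanLin M w.1⟫| ≤ ‖w.1‖ * ‖Matrix.toEuclideanLin M w.1‖ :=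
        abs_real_inner_le_norm _ _
      have h2 : ‖Matrix.toEuclideanLin M w.1‖ ≤
          ‖LinearMap.toContinuousLinearMap (Matrix.toEuclideanLin M)‖ := by
        have := (LinearMap.toContinuousLinearMap (Matrix.toEuclideanLin M)).le_opNorm w.1
        simpa [w.2] using this
      have := neg_abs_le ⟪w.1, Matrix.toEuclideanLin M w.1⟫
      have h3 : ‖w.1‖ * ‖Matrix.toEuclideanLin M w.1‖ ≤
          ‖LinearMap.toContinuousLinearMap (Matrix.toEuclideanLin M)‖ := by
        rw [w.2, one_mul]; exact h2
      linarith [h1.trans h3]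
    have hle : lambdaMin M ≤ ⟪z, Matrix.toEuclideanLin M z⟫ :=
      ciInf_le hbdd (⟨z, hz1⟩ : {z : EuclideanSpace ℝ ι // ‖z‖ = 1})
    have hsum0 : (0:ℝ) ≤ ∑ i, u i ^2 := Finset.sum_nonneg fun _ _ => sq_nonneg _
    have hinner : ⟪z, Matrix.toEuclideanLin M z⟫ =
        ‖uE‖⁻¹ * ‖uE‖⁻¹ * ∑ i, u i * (M.mulVec u) i := by
      simp only [PiLp.inner_apply, RCLike.inner_apply, starRingEnd_apply, star_trivial]
      rw [Finset.mul_sum]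
      refine Finset.sum_congr rfl fun i _ => ?_
      have hzi : z i = ‖uE‖⁻¹ * u i := rfl
      have hMz : (Matrix.toEuclideanLin M z) i = ∑ j, M i j * (‖uE‖⁻¹ * u j) := rfl
      have hMu : (M.mulVec u) i = ∑ j, M i j * u j := rfl
      have hpull : ∑ j, M i j * (‖uE‖⁻¹ * u j) = ‖uE‖⁻¹ * ∑ j, M i j * u j := by
        rw [Finset.mul_sum]
        exact Finset.sum_congr rfl fun j _ => by ring
      rw [hzi, hMz, hMu, hpull]
      ring
    have hnormsq : ‖uE‖^2 = ∑ i, u i ^2 := by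
      rw [aux_normsq]; rfl
    have hone : ‖uE‖⁻¹ * ‖uE‖⁻¹ * (∑ i, u i ^2) = 1 := by
      rw [← hnormsq, sq]
      field_simp
    calc lambdaMin M * ∑ i, u i ^2
        ≤ (‖uE‖⁻¹ * ‖uE‖⁻¹ * ∑ i, u i * (M.mulVec u) i) * ∑ i, u i ^2 :=
          mul_le_mul_of_nonneg_right (hle.trans_eq hinner) hsum0
      _ = (∑ i, u i * (M.mulVec u) i) * (‖uE‖⁻¹ * ‖uE‖⁻¹ * ∑ i, u i ^2) := by ring
      _ = ∑ i, u i * (M.mulVec u) i := by rw [hone, mul_one]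

lemma aux_qform {m d : ℕ} (W : Matrix (Fin m) (Fin d) ℝ) (u : Fin m → ℝ) :
    ∑ a, u a * ((W * Wᵀ).mulVec u) a = ∑ j, (Wᵀ.mulVec u j)^2 := by
  have h3 : ∀ j, Wᵀ.mulVec u j = ∑ b, W b j * u b := fun j => by
    simp [Matrix.mulVec, dotProduct, Matrix.transpose_apply]
  have step1 : ∀ a, u a * ((W * Wᵀ).mulVec u) a = ∑ j, (u a * W a j) * (Wᵀ.mulVec u j) := by
    intro a
    have h1 : ((W * Wᵀ).mulVec u) a = ∑ b, (∑ j, W a j * W b j) * u b := by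
      simp [Matrix.mulVec, dotProduct, Matrix.mul_apply, Matrix.transpose_apply]
    rw [h1, Finset.mul_sum]
    have h2 : ∀ b ∈ Finset.univ, u a * ((∑ j, W a j * W b j) * u b) =
        ∑ j, (u a * W a j) * (W b j * u b) := fun b _ => by
      rw [Finset.sum_mul, Finset.mul_sum]
      exact Finset.sum_congr rfl fun j _ => by ring
    rw [Finset.sum_congr rfl h2, Finset.sum_comm]
    refine Finset.sum_congr rfl fun j _ => ?_
    rw [h3 j, Finset.mul_sum]
  rw [Finset.sum_congr rfl fun a _ => step1 a, Finset.sum_comm]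
  refine Finset.sum_congr rfl fun j _ => ?_
  rw [sq, ← Finset.sum_mul]
  congr 1
  rw [h3 j]
  exact Finset.sum_congr rfl fun a _ => by ring

lemma aux_det_ne {m d : ℕ} (W : Matrix (Fin m) (Fin d) ℝ)
    (hl : 0 < lambdaMin (W * Wᵀ)) : IsUnit (W * Wᵀ).det := by
  rw [isUnit_iff_ne_zero]
  intro hdet
  obtain ⟨v, hv0, hv⟩ := (Matrix.exists_mulVec_eq_zero_iff).mpr hdet
  have h1 := aux_rayleigh (W * Wᵀ) v
  rw [hv] at h1
  simp only [Pi.zero_apply, mul_zero, Finset.sum_const_zero] at h1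
  have hpos : 0 < ∑ i, v i ^2 := by
    obtain ⟨i, hi⟩ := Function.ne_iff.mp hv0
    have : 0 < v i ^2 := lt_of_le_of_ne (sq_nonneg _) (Ne.symm (pow_ne_zero 2 hi))
    exact lt_of_lt_of_le this (Finset.single_le_sum (fun i _ => sq_nonneg (v i)) (Finset.mem_univ i))
  nlinarith

lemma aux_pinv_bound {m d : ℕ} (W : Matrix (Fin m) (Fin d) ℝ)
    (hl : 0 < lambdaMin (W * Wᵀ)) (v : Fin m → ℝ) :
    ∑ j, ((Wᵀ * (W * Wᵀ)⁻¹).mulVec v j)^2 ≤ (1 / lambdaMin (W * Wᵀ)) * ∑ a, v a ^2 := by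
  set A := W * Wᵀ with hA
  have hAinv : A * A⁻¹ = 1 := Matrix.mul_nonsing_inv A (aux_det_ne W hl)
  set u : Fin m → ℝ := A⁻¹.mulVec v with hu
  have hWv : (Wᵀ * A⁻¹).mulVec v = Wᵀ.mulVec u := by
    rw [hu, ← Matrix.mulVec_mulVec]
  have hAu : A.mulVec u = v := by
    rw [hu, Matrix.mulVec_mulVec, hAinv, Matrix.one_mulVec]
  set Q := ∑ j, (Wᵀ.mulVec u j)^2 with hQ
  have hQ0 : 0 ≤ Q := Finset.sum_nonneg fun _ _ => sq_nonneg _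
  have hQv : Q = ∑ a, u a * v a := by
    rw [hQ, ← aux_qform W u, ← hA, hAu]
  have hray : lambdaMin A * ∑ i, u i ^2 ≤ Q := by
    rw [hQ, ← aux_qform W u, ← hA]
    exact aux_rayleigh A u
  have hcs : (∑ a, u a * v a)^2 ≤ (∑ a, u a ^2) * ∑ a, v a ^2 :=
    Finset.sum_mul_sq_le_sq_mul_sq _ _ _
  have hsu : (0:ℝ) ≤ ∑ a, u a ^2 := Finset.sum_nonneg fun _ _ => sq_nonneg _
  have hsv : (0:ℝ) ≤ ∑ a, v a ^2 := Finset.sum_nonneg fun _ _ => sq_nonneg _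
  rw [hWv, ← hQ]
  rcases hQ0.eq_or_lt' with h | h
  · rw [h]; positivity
  · have hkey : lambdaMin A * Q ≤ ∑ a, v a ^2 := by
      have h2 : Q^2 ≤ (∑ a, u a ^2) * ∑ a, v a ^2 := by rw [hQv]; exact hcs
      nlinarith [hray, h2, hl, h, hsv, hsu]
    rw [div_mul_eq_mul_div, one_mul, le_div_iff₀ hl]
    linarith [hkey]

lemma aux_convex_grad {E : Type} [NormedAddCommGroup E] [InnerProductSpace ℝ E]
    (g : E → ℝ) (hconv : ConvexOn ℝ Set.univ g) (hdiff : Differentiable ℝ g) (p q : E) :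
    g p - g q ≤ fderiv ℝ g p (p - q) := by
  have hline : HasDerivAt (fun t : ℝ => t • (q - p) + p) (q - p) 0 := by
    simpa using ((hasDerivAt_id (0:ℝ)).smul_const (q - p)).add_const p
  have hg : HasFDerivAt g (fderiv ℝ g p) ((0:ℝ) • (q - p) + p) := by
    simpa using (hdiff p).hasFDerivAt
  have hψ : HasDerivAt (fun t : ℝ => g (t • (q - p) + p)) (fderiv ℝ g p (q - p)) 0 :=
    hg.comp_hasDerivAt 0 hline
  have hψconv : ConvexOn ℝ Set.univ (fun t : ℝ => g (t • (q - p) + p)) := by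
    have h := hconv.comp_affineMap (AffineMap.lineMap p q : ℝ →ᵃ[ℝ] E)
    have he : ⇑(AffineMap.lineMap p q : ℝ →ᵃ[ℝ] E) ⁻¹' (Set.univ : Set E) = Set.univ := by simp
    rw [he] at h
    have hfe : (fun t : ℝ => g (t • (q - p) + p)) =
        g ∘ (AffineMap.lineMap p q : ℝ →ᵃ[ℝ] E) := by
      funext t
      simp [AffineMap.lineMap_apply]
    rw [hfe]
    exact h
  have hslope := hψconv.le_slope_of_hasDerivAt (Set.mem_univ (0:ℝ)) (Set.mem_univ (1:ℝ))
    zero_lt_one hψ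
  rw [slope_def_field] at hslope
  simp only [one_smul, zero_smul, zero_add, sub_zero, div_one, sub_add_cancel] at hslope
  have hmap : (fderiv ℝ g p) (p - q) = -((fderiv ℝ g p) (q - p)) := by
    rw [← map_neg, neg_sub]
  linarith [hslope, hmap.ge, hmap.le]
lemma aux_sum_mul_assoc {α β γ : Type} [Fintype β] [Fintype γ]
    (M : α → β → ℝ) (N : β → γ → ℝ) (c : γ → ℝ) (a : α) :
    ∑ j, M a j * (∑ l, N j l * c l) = ∑ l, (∑ j, M a j * N j l) * c l := by
  simp only [Finset.mul_sum, Finset.sum_mul]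
  rw [Finset.sum_comm]
  exact Finset.sum_congr rfl fun l _ => Finset.sum_congr rfl fun j _ => by ring

/-- Theorem 6 of the paper: vector-output version of Theorem 1. -/
theorem norm_gradient_ge_suboptimality_vec
    {m d k n : ℕ} (ℓ : Vec m → Vec m → ℝ) (f : Vec d → Vec k)
    (x : Fin n → Vec d) (y : Fin n → Vec m)
    (hconv : ∀ y₀ : Vec m, ConvexOn ℝ Set.univ fun p => ℓ p y₀)
    (hdiff : ∀ y₀ : Vec m, Differentiable ℝ fun p => ℓ p y₀)
    (W : Matrix (Fin m) (Fin d) ℝ) (V : Matrix (Fin d) (Fin k) ℝ)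
    (hrank : W.rank = m) (hsmin : 0 < sMin W)
    (U : Matrix (Fin m) (Fin d) ℝ) :
    ‖gradient (netObjVec ℓ f x y) (pairWVm W V)‖ ≥
      (netObjVec ℓ f x y (pairWVm W V) - linObjVec ℓ x y U) /
        Real.sqrt (2 * frobNorm W ^ 2 +
          frobNorm U ^ 2 * (2 + matSpectralNorm V ^ 2 / sMin W ^ 2)) := by
  classical
  have hlam9 : 0 < lambdaMin (W * Wᵀ) := Real.sqrt_pos.mp hsmin
  have hdet := aux_det_ne W hlam9
  have hAinv : (W * Wᵀ) * (W * Wᵀ)⁻¹ = 1 := Matrix.mul_nonsing_inv _ hdet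
  set DV : Matrix (Fin d) (Fin k) ℝ := Wᵀ * ((W * Wᵀ)⁻¹ * (U * V)) with hDV
  have hWDV : W * DV = U * V := by
    rw [hDV, ← Matrix.mul_assoc, ← Matrix.mul_assoc, hAinv, Matrix.one_mul]
  set z₀ : ParamM m d k := pairWVm W V with hz₀
  set Δ : ParamM m d k := pairWVm (W - U) DV with hΔdef
  set Pmap : Fin n → ParamM m d k → Vec m := fun i z =>
    (EuclideanSpace.equiv (Fin m) ℝ).symm fun a =>
      ∑ j, z (Sum.inl (a, j)) * ((x i) j + ∑ l, z (Sum.inr (j, l)) * (f (x i)) l) with hPmap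
  have hnet : ∀ z, netObjVec ℓ f x y z = (1 / (n:ℝ)) * ∑ i, ℓ (Pmap i z) (y i) := fun _ => rfl
  set qvec : Fin n → Vec m := fun i =>
    (EuclideanSpace.equiv (Fin m) ℝ).symm (U.mulVec fun j => (x i) j) with hqvec
  have hlin : linObjVec ℓ x y U = (1 / (n:ℝ)) * ∑ i, ℓ (qvec i) (y i) := rfl
  set r : Fin n → Fin d → ℝ := fun i j => (x i) j + ∑ l, V j l * (f (x i)) l with hrdef
  set s' : Fin n → Fin d → ℝ := fun i j => ∑ l, DV j l * (f (x i)) l with hs'def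
  set Avec : Fin n → Vec m := fun i => Pmap i z₀ with hAvec
  set Bvec : Fin n → Vec m := fun i => (EuclideanSpace.equiv (Fin m) ℝ).symm fun a =>
    (∑ j, (W a j - U a j) * r i j) + ∑ j, W a j * s' i j with hBvec
  set Cvec : Fin n → Vec m := fun i => (EuclideanSpace.equiv (Fin m) ℝ).symm fun a =>
    ∑ j, (W a j - U a j) * s' i j with hCvec
  -- the curve identity
  have curve_eq : ∀ i (t : ℝ), Pmap i (z₀ + t • Δ) = Avec i + t • Bvec i + t^2 • Cvec i := by
    intro i t
    ext a
    have lhs_eq : Pmap i (z₀ + t • Δ) a =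
        ∑ j, (W a j + t * (W a j - U a j)) * (r i j + t * s' i j) := by
      show (∑ j, (z₀ + t • Δ) (Sum.inl (a, j)) *
          ((x i) j + ∑ l, (z₀ + t • Δ) (Sum.inr (j, l)) * (f (x i)) l)) = _
      refine Finset.sum_congr rfl fun j _ => ?_
      have h1 : (z₀ + t • Δ) (Sum.inl (a, j)) = W a j + t * (W a j - U a j) := rfl
      have h2 : ∀ l, (z₀ + t • Δ) (Sum.inr (j, l)) = V j l + t * DV j l := fun l => rfl
      rw [h1]
      congr 1
      simp only [h2]
      have h3 : ∑ l, (V j l + t * DV j l) * (f (x i)) l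
          = (∑ l, V j l * (f (x i)) l) + t * ∑ l, DV j l * (f (x i)) l := by
        rw [Finset.mul_sum, ← Finset.sum_add_distrib]
        exact Finset.sum_congr rfl fun l _ => by ring
      rw [h3]
      simp only [hrdef, hs'def]
      ring
    have rhs_eq : (Avec i + t • Bvec i + t^2 • Cvec i) a
        = (∑ j, W a j * r i j) + t * ((∑ j, (W a j - U a j) * r i j) + ∑ j, W a j * s' i j)
          + t^2 * (∑ j, (W a j - U a j) * s' i j) := rfl
    rw [lhs_eq, rhs_eq]
    have expand : ∀ j ∈ Finset.univ, (W a j + t * (W a j - U a j)) * (r i j + t * s' i j)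
        = W a j * r i j + (t * ((W a j - U a j) * r i j) + t * (W a j * s' i j))
          + t^2 * ((W a j - U a j) * s' i j) := fun j _ => by ring
    rw [Finset.sum_congr rfl expand, Finset.sum_add_distrib, Finset.sum_add_distrib,
      Finset.sum_add_distrib, ← Finset.mul_sum, ← Finset.mul_sum, ← Finset.mul_sum]
    ring
  -- B = A - q, using the pseudoinverse identity
  have hBeq : ∀ i, Bvec i = Avec i - qvec i := by
    intro i
    ext a
    have hBa : Bvec i a = (∑ j, (W a j - U a j) * r i j) + ∑ j, W a j * s' i j := rfl
    have hAa : Avec i a = ∑ j, W a j * r i j := rfl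
    have hqa : qvec i a = ∑ j, U a j * (x i) j := rfl
    have hsub : (Avec i - qvec i) a = Avec i a - qvec i a := rfl
    rw [hBa, hsub, hAa, hqa]
    have h1 : ∑ j, W a j * s' i j = ∑ j, U a j * (∑ l, V j l * (f (x i)) l) := by
      calc ∑ j, W a j * s' i j
          = ∑ l, (∑ j, W a j * DV j l) * (f (x i)) l :=
            aux_sum_mul_assoc (fun a j => W a j) (fun j l => DV j l) (fun l => (f (x i)) l) a
        _ = ∑ l, (∑ j, U a j * V j l) * (f (x i)) l := by
            refine Finset.sum_congr rfl fun l _ => ?_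
            congr 1
            have hc := congrFun (congrFun hWDV a) l
            simpa [Matrix.mul_apply] using hc
        _ = ∑ j, U a j * (∑ l, V j l * (f (x i)) l) :=
            (aux_sum_mul_assoc (fun a j => U a j) (fun j l => V j l) (fun l => (f (x i)) l) a).symm
    rw [h1]
    have h2 : ∀ j ∈ Finset.univ, (W a j - U a j) * r i j
        = W a j * r i j - U a j * r i j := fun j _ => by ring
    rw [Finset.sum_congr rfl h2, Finset.sum_sub_distrib]
    have h3 : ∀ j ∈ Finset.univ, U a j * r i j
        = U a j * (x i) j + U a j * (∑ l, V j l * (f (x i)) l) := fun j _ => by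
      show U a j * ((x i) j + ∑ l, V j l * (f (x i)) l) = _
      ring
    rw [Finset.sum_congr rfl h3, Finset.sum_add_distrib]
    ring
  -- differentiability
  have hPdiff : ∀ i, Differentiable ℝ (Pmap i) := by
    intro i
    have hcoordF : ∀ s : (Fin m × Fin d) ⊕ (Fin d × Fin k),
        Differentiable ℝ (fun z : ParamM m d k => z s) := fun s =>
      (EuclideanSpace.proj (𝕜 := ℝ) s : ParamM m d k →L[ℝ] ℝ).differentiable
    have hpi : Differentiable ℝ (fun (z : ParamM m d k) (a : Fin m) =>
        ∑ j, z (Sum.inl (a, j)) * ((x i) j + ∑ l, z (Sum.inr (j, l)) * (f (x i)) l)) := by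
      rw [differentiable_pi]
      intro a
      apply Differentiable.fun_sum
      intro j _
      exact (hcoordF _).mul ((differentiable_const _).add
        (Differentiable.fun_sum fun l _ => (hcoordF _).mul_const _))
    exact ((PiLp.continuousLinearEquiv 2 ℝ (fun _ : Fin m => ℝ)).symm.differentiable).comp hpi
  have hFdiffAll : DifferentiableAt ℝ (netObjVec ℓ f x y) z₀ := by
    have he : netObjVec ℓ f x y = fun z => (1 / (n:ℝ)) * ∑ i, ℓ (Pmap i z) (y i) := rfl
    rw [he]
    apply DifferentiableAt.const_mul
    apply DifferentiableAt.fun_sum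
    intro i _
    exact (hdiff (y i) (Pmap i z₀)).comp z₀ ((hPdiff i) z₀)
  -- derivative along the line
  set L : Fin n → (Vec m →L[ℝ] ℝ) := fun i => fderiv ℝ (fun p => ℓ p (y i)) (Avec i) with hLdef
  have hcurve : ∀ i, HasDerivAt (fun t : ℝ => Pmap i (z₀ + t • Δ)) (Bvec i) 0 := by
    intro i
    have h0 : HasDerivAt (fun t : ℝ => Avec i + t • Bvec i + t^2 • Cvec i) (Bvec i) 0 := by
      have h1 := ((hasDerivAt_id (0:ℝ)).smul_const (Bvec i)).const_add (Avec i)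
      have h2 := (hasDerivAt_pow 2 (0:ℝ)).smul_const (Cvec i)
      simpa using h1.fun_add h2
    have hfe : (fun t : ℝ => Pmap i (z₀ + t • Δ))
        = fun t => Avec i + t • Bvec i + t^2 • Cvec i := funext (curve_eq i)
    rw [hfe]
    exact h0
  have hφi : ∀ i, HasDerivAt (fun t : ℝ => ℓ (Pmap i (z₀ + t • Δ)) (y i)) (L i (Bvec i)) 0 := by
    intro i
    have hP0 : z₀ + (0:ℝ) • Δ = z₀ := by rw [zero_smul, add_zero]
    have hLL : HasFDerivAt (fun p => ℓ p (y i)) (L i) (Pmap i (z₀ + (0:ℝ) • Δ)) := by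
      rw [hP0]
      exact ((hdiff (y i)) (Avec i)).hasFDerivAt
    exact hLL.comp_hasDerivAt 0 (hcurve i)
  have hsum : HasDerivAt (fun t : ℝ => ∑ i, ℓ (Pmap i (z₀ + t • Δ)) (y i))
      (∑ i, L i (Bvec i)) 0 := HasDerivAt.fun_sum fun i _ => hφi i
  have hφ : HasDerivAt (fun t : ℝ => netObjVec ℓ f x y (z₀ + t • Δ))
      ((1 / (n:ℝ)) * ∑ i, L i (Bvec i)) 0 := hsum.const_mul (1 / (n:ℝ))
  have hline : HasDerivAt (fun t : ℝ => z₀ + t • Δ) Δ 0 := by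
    simpa using ((hasDerivAt_id (0:ℝ)).smul_const Δ).const_add z₀
  have hcomp : HasDerivAt (fun t : ℝ => netObjVec ℓ f x y (z₀ + t • Δ))
      ((fderiv ℝ (netObjVec ℓ f x y) z₀) Δ) 0 := by
    have hP0 : z₀ + (0:ℝ) • Δ = z₀ := by rw [zero_smul, add_zero]
    have hF : HasFDerivAt (netObjVec ℓ f x y) (fderiv ℝ (netObjVec ℓ f x y) z₀)
        (z₀ + (0:ℝ) • Δ) := by
      rw [hP0]
      exact hFdiffAll.hasFDerivAt
    exact hF.comp_hasDerivAt 0 hline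
  have hfdval : (fderiv ℝ (netObjVec ℓ f x y) z₀) Δ = (1 / (n:ℝ)) * ∑ i, L i (Bvec i) :=
    hcomp.unique hφ
  have hgrad : ⟪gradient (netObjVec ℓ f x y) z₀, Δ⟫ = (fderiv ℝ (netObjVec ℓ f x y) z₀) Δ := by
    show ⟪(InnerProductSpace.toDual ℝ (ParamM m d k)).symm
      (fderiv ℝ (netObjVec ℓ f x y) z₀), Δ⟫ = _
    exact InnerProductSpace.toDual_symm_apply
  -- convexity
  have hconvi : ∀ i, ℓ (Avec i) (y i) - ℓ (qvec i) (y i) ≤ L i (Bvec i) := by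
    intro i
    rw [hBeq i]
    exact aux_convex_grad (fun p => ℓ p (y i)) (hconv (y i)) (hdiff (y i)) (Avec i) (qvec i)
  have hsub : netObjVec ℓ f x y z₀ - linObjVec ℓ x y U ≤ (1 / (n:ℝ)) * ∑ i, L i (Bvec i) := by
    rw [hnet z₀, hlin, ← mul_sub, ← Finset.sum_sub_distrib]
    exact mul_le_mul_of_nonneg_left (Finset.sum_le_sum fun i _ => hconvi i)
      (div_nonneg zero_le_one (Nat.cast_nonneg n))
  -- norm of Δ
  have hΔsum : ‖Δ‖^2 = (∑ a, ∑ j, (W a j - U a j)^2) + ∑ j, ∑ l, (DV j l)^2 := by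
    rw [aux_normsq, Fintype.sum_sum_type]
    congr 1
    · rw [Fintype.sum_prod_type]
      exact Finset.sum_congr rfl fun a _ => Finset.sum_congr rfl fun j _ => rfl
    · rw [Fintype.sum_prod_type]
      exact Finset.sum_congr rfl fun j _ => Finset.sum_congr rfl fun l _ => rfl
  have hfrobW : frobNorm W ^2 = ∑ a, ∑ j, W a j^2 := Real.sq_sqrt (by positivity)
  have hfrobU : frobNorm U ^2 = ∑ a, ∑ j, U a j^2 := Real.sq_sqrt (by positivity)
  have hsmin2 : sMin W ^2 = lambdaMin (W * Wᵀ) := Real.sq_sqrt hlam9.le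
  have h1 : ∑ a, ∑ j, (W a j - U a j)^2
      ≤ 2 * (∑ a, ∑ j, W a j^2) + 2 * (∑ a, ∑ j, U a j^2) := by
    calc ∑ a, ∑ j, (W a j - U a j)^2 ≤ ∑ a, ∑ j, (2 * W a j^2 + 2 * U a j^2) :=
        Finset.sum_le_sum fun a _ => Finset.sum_le_sum fun j _ => by
          nlinarith [sq_nonneg (W a j + U a j)]
      _ = 2 * (∑ a, ∑ j, W a j^2) + 2 * (∑ a, ∑ j, U a j^2) := by
        simp [Finset.sum_add_distrib, Finset.mul_sum]
  have h2 : ∑ j, ∑ l, (DV j l)^2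
      ≤ (matSpectralNorm V^2 / lambdaMin (W * Wᵀ)) * ∑ a, ∑ j, U a j^2 := by
    have hDVfact : DV = (Wᵀ * (W * Wᵀ)⁻¹) * (U * V) := by rw [hDV, Matrix.mul_assoc]
    have hDVcol : ∀ l j, DV j l = (Wᵀ * (W * Wᵀ)⁻¹).mulVec (fun a => (U * V) a l) j := by
      intro l j
      rw [hDVfact]
      simp [Matrix.mul_apply, Matrix.mulVec, dotProduct]
    calc ∑ j, ∑ l, (DV j l)^2 = ∑ l, ∑ j, (DV j l)^2 := Finset.sum_comm
      _ ≤ ∑ l, (1 / lambdaMin (W * Wᵀ)) * ∑ a, ((U * V) a l)^2 := by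
          refine Finset.sum_le_sum fun l _ => ?_
          rw [Finset.sum_congr rfl fun j _ => by rw [hDVcol l j]]
          exact aux_pinv_bound W hlam9 (fun a => (U * V) a l)
      _ = (1 / lambdaMin (W * Wᵀ)) * ∑ a, ∑ l, ((U * V) a l)^2 := by
          rw [← Finset.mul_sum, Finset.sum_comm]
      _ ≤ (1 / lambdaMin (W * Wᵀ)) * (matSpectralNorm V^2 * ∑ a, ∑ j, U a j^2) := by
          refine mul_le_mul_of_nonneg_left ?_ (by positivity)
          calc ∑ a, ∑ l, ((U * V) a l)^2
              ≤ ∑ a, (matSpectralNorm V^2 * ∑ j, U a j^2) := by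
                refine Finset.sum_le_sum fun a _ => ?_
                have he : ∀ l, (U * V) a l = Vᵀ.mulVec (fun j => U a j) l := fun l => by
                  simp [Matrix.mul_apply, Matrix.mulVec, dotProduct,
                    Matrix.transpose_apply, mul_comm]
                rw [Finset.sum_congr rfl fun l _ => by rw [he l]]
                exact aux_sum_sq_mulVec_transpose_le V (fun j => U a j)
            _ = matSpectralNorm V^2 * ∑ a, ∑ j, U a j^2 := by rw [← Finset.mul_sum]
      _ = (matSpectralNorm V^2 / lambdaMin (W * Wᵀ)) * ∑ a, ∑ j, U a j^2 := by ring
  have hΔle : ‖Δ‖ ≤ Real.sqrt (2 * frobNorm W ^ 2 +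
      frobNorm U ^ 2 * (2 + matSpectralNorm V ^ 2 / sMin W ^ 2)) := by
    rw [← Real.sqrt_sq (norm_nonneg Δ)]
    apply Real.sqrt_le_sqrt
    rw [hΔsum, hfrobW, hfrobU, hsmin2]
    calc (∑ a, ∑ j, (W a j - U a j)^2) + ∑ j, ∑ l, (DV j l)^2
        ≤ (2 * (∑ a, ∑ j, W a j^2) + 2 * (∑ a, ∑ j, U a j^2))
          + (matSpectralNorm V^2 / lambdaMin (W * Wᵀ)) * ∑ a, ∑ j, U a j^2 := add_le_add h1 h2
      _ = 2 * (∑ a, ∑ j, W a j^2) + (∑ a, ∑ j, U a j^2)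
          * (2 + matSpectralNorm V ^ 2 / lambdaMin (W * Wᵀ)) := by ring
  -- final assembly
  have hineq : netObjVec ℓ f x y z₀ - linObjVec ℓ x y U ≤
      ‖gradient (netObjVec ℓ f x y) z₀‖ * Real.sqrt (2 * frobNorm W ^ 2 +
        frobNorm U ^ 2 * (2 + matSpectralNorm V ^ 2 / sMin W ^ 2)) := by
    have hinner_le : (1 / (n:ℝ)) * ∑ i, L i (Bvec i)
        ≤ ‖gradient (netObjVec ℓ f x y) z₀‖ * ‖Δ‖ := by
      rw [← hfdval, ← hgrad]
      exact real_inner_le_norm _ _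
    calc netObjVec ℓ f x y z₀ - linObjVec ℓ x y U
        ≤ (1 / (n:ℝ)) * ∑ i, L i (Bvec i) := hsub
      _ ≤ ‖gradient (netObjVec ℓ f x y) z₀‖ * ‖Δ‖ := hinner_le
      _ ≤ ‖gradient (netObjVec ℓ f x y) z₀‖ * Real.sqrt (2 * frobNorm W ^ 2 +
            frobNorm U ^ 2 * (2 + matSpectralNorm V ^ 2 / sMin W ^ 2)) :=
          mul_le_mul_of_nonneg_left hΔle (norm_nonneg _)
  rcases (Real.sqrt_nonneg (2 * frobNorm W ^ 2 +
      frobNorm U ^ 2 * (2 + matSpectralNorm V ^ 2 / sMin W ^ 2))).eq_or_lt' with hB | hB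
  · rw [ge_iff_le, hB, div_zero]
    exact norm_nonneg _
  · rw [ge_iff_le, div_le_iff₀ hB]
    exact hineq

end
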